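/- arXiv:1511.04648 — 3 statements merged into one kernel-verified Lean document; each statement's English description precedes it below -/
import Mathlib

section
/- Generalized Rolle's theorem: Let f be real-valued and continuous on [a,b] with f(a) = f(b). Suppose that for every x in (a,b), both one-sided derivatives f'(x+) = lim_{h→0+} (f(x+h)-f(x))/h and f'(x-) = lim_{h→0-} (f(x+h)-f(x))/h exist. Then there exists c in (a,b) such that one of f'(c+), f'(c-) is ≥ 0 and the other is ≤ 0. -/
open Set

lemma max_ineq (f : ℝ → ℝ) (a b : ℝ) (dp dm : ℝ → ℝ) (c : ℝ) (hc : c ∈ Set.Ioo a b)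
    (hmax : IsMaxOn f (Set.Icc a b) c)
    (hdp : HasDerivWithinAt f (dp c) (Set.Ici c) c)
    (hdm : HasDerivWithinAt f (dm c) (Set.Iic c) c) :
    dp c ≤ 0 ∧ 0 ≤ dm c := by
  have hmem : Set.Icc a b ∈ nhds c := Icc_mem_nhds hc.1 hc.2
  have hmaxp : IsLocalMaxOn f (Set.Ici c) c := by
    filter_upwards [nhdsWithin_le_nhds hmem] with y hy using hmax hy
  have hmaxm : IsLocalMaxOn f (Set.Iic c) c := by
    filter_upwards [nhdsWithin_le_nhds hmem] with y hy using hmax hy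
  constructor
  · have h1 : (1:ℝ) ∈ posTangentConeAt (Set.Ici c) c := by
      apply mem_posTangentConeAt_of_segment_subset
      intro y hy
      rcases hy with ⟨s, t, hs, ht, hst, rfl⟩
      simp only [smul_eq_mul, mem_Ici]
      have : s = 1 - t := by linarith
      rw [this]; nlinarith
    have := hmaxp.hasFDerivWithinAt_nonpos hdp.hasFDerivWithinAt h1
    simpa using this
  · have h1 : (-1:ℝ) ∈ posTangentConeAt (Set.Iic c) c := by
      apply mem_posTangentConeAt_of_segment_subset
      intro y hy
      rcases hy with ⟨s, t, hs, ht, hst, rfl⟩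
      simp only [smul_eq_mul, mem_Iic]
      have : s = 1 - t := by linarith
      rw [this]; nlinarith
    have := hmaxm.hasFDerivWithinAt_nonpos hdm.hasFDerivWithinAt h1
    simp only [ContinuousLinearMap.smulRight_apply, ContinuousLinearMap.one_apply,
      ContinuousLinearMap.toSpanSingleton_apply, one_smul, smul_eq_mul, mul_neg_one] at this
    linarith

lemma min_ineq (f : ℝ → ℝ) (a b : ℝ) (dp dm : ℝ → ℝ) (c : ℝ) (hc : c ∈ Set.Ioo a b)
    (hmin : IsMinOn f (Set.Icc a b) c)
    (hdp : HasDerivWithinAt f (dp c) (Set.Ici c) c)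
    (hdm : HasDerivWithinAt f (dm c) (Set.Iic c) c) :
    0 ≤ dp c ∧ dm c ≤ 0 := by
  have := max_ineq (fun x => -f x) a b (fun x => -dp x) (fun x => -dm x) c hc
    hmin.neg hdp.neg hdm.neg
  constructor <;> linarith [this.1, this.2]

theorem generalized_rolle (f : ℝ → ℝ) (a b : ℝ) (hab : a < b)
    (hf : ContinuousOn f (Set.Icc a b)) (hfab : f a = f b)
    (dp dm : ℝ → ℝ)
    (hdp : ∀ x ∈ Set.Ioo a b, HasDerivWithinAt f (dp x) (Set.Ici x) x)
    (hdm : ∀ x ∈ Set.Ioo a b, HasDerivWithinAt f (dm x) (Set.Iic x) x) :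
    ∃ c ∈ Set.Ioo a b, (0 ≤ dp c ∧ dm c ≤ 0) ∨ (dp c ≤ 0 ∧ 0 ≤ dm c) := by
  have hne : (Set.Icc a b).Nonempty := Set.nonempty_Icc.2 hab.le
  obtain ⟨M, hM, hMmax⟩ := isCompact_Icc.exists_isMaxOn hne hf
  obtain ⟨m, hm, hmmin⟩ := isCompact_Icc.exists_isMinOn hne hf
  by_cases hM' : M ∈ Set.Ioo a b
  · exact ⟨M, hM', Or.inr (max_ineq f a b dp dm M hM' hMmax (hdp M hM') (hdm M hM'))⟩
  by_cases hm' : m ∈ Set.Ioo a b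
  · exact ⟨m, hm', Or.inl (min_ineq f a b dp dm m hm' hmmin (hdp m hm') (hdm m hm'))⟩
  -- both extrema at endpoints: f is constant, so every interior point is a max
  have hMa : f M = f a := by
    rcases eq_or_lt_of_le hM.1 with h | h
    · rw [← h]
    · have : M = b := by
        by_contra hMb
        exact hM' ⟨h, lt_of_le_of_ne hM.2 hMb⟩
      rw [this, hfab]
  have hma : f m = f a := by
    rcases eq_or_lt_of_le hm.1 with h | h
    · rw [← h]
    · have : m = b := by
        by_contra hmb
        exact hm' ⟨h, lt_of_le_of_ne hm.2 hmb⟩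
      rw [this, hfab]
  set c := (a + b) / 2 with hc
  have hcI : c ∈ Set.Ioo a b := ⟨by linarith, by linarith⟩
  have hfc : f c = f a := le_antisymm (hMa ▸ hMmax ⟨hcI.1.le, hcI.2.le⟩)
    (hma ▸ hmmin ⟨hcI.1.le, hcI.2.le⟩)
  have hcmax : IsMaxOn f (Set.Icc a b) c := fun y hy => by
    simp only [mem_setOf_eq, hfc, ← hMa]; exact hMmax hy
  exact ⟨c, hcI, Or.inr (max_ineq f a b dp dm c hcI hcmax (hdp c hcI) (hdm c hcI))⟩
end

section
/- Let φ_{n+1}(ξ) = ∫_{-1}^ξ w(t) L_n(t) dt for n ≥ 1, where w = 1/β̂ with β̂ piecewise constant positive on [-1,1], and {L_n} orthogonal with respect to weight w. Then ∫_{-1}^1 φ_{n+1}(ξ) v(ξ) dξ = 0 for every polynomial v of degree at most n-2. -/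
open MeasureTheory intervalIntegral

noncomputable def antider (p : Polynomial ℝ) : Polynomial ℝ :=
  p.sum fun i a => Polynomial.C (a / (i + 1)) * Polynomial.X ^ (i + 1)

lemma antider_deriv (p : Polynomial ℝ) : Polynomial.derivative (antider p) = p := by
  unfold antider
  rw [Polynomial.sum, map_sum]
  simp only [Polynomial.derivative_C_mul_X_pow]
  have h : ∀ i ∈ p.support, Polynomial.C (p.coeff i / (i+1) * ((i:ℝ)+1)) *
      Polynomial.X ^ (i + 1 - 1) = Polynomial.C (p.coeff i) * Polynomial.X ^ i := by
    intro i _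
    have h1 : ((i:ℝ) + 1) ≠ 0 := by positivity
    rw [div_mul_cancel₀ _ h1]
    simp
  calc (∑ i ∈ p.support, Polynomial.C (p.coeff i / (↑i + 1) * (↑(i+1) : ℝ)) *
        Polynomial.X ^ (i + 1 - 1))
      = ∑ i ∈ p.support, Polynomial.C (p.coeff i) * Polynomial.X ^ i := by
        refine Finset.sum_congr rfl fun i hi => ?_
        push_cast
        exact h i hi
    _ = p := by conv_rhs => rw [← Polynomial.sum_C_mul_X_pow_eq p, Polynomial.sum]

lemma antider_degree (p : Polynomial ℝ) : (antider p).degree ≤ (p.natDegree + 1 : ℕ) := by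
  unfold antider
  rw [Polynomial.sum]
  refine (Polynomial.degree_sum_le _ _).trans ?_
  rw [Finset.sup_le_iff]
  intro i hi
  refine (Polynomial.degree_C_mul_X_pow_le _ _).trans ?_
  exact_mod_cast Nat.succ_le_succ (Polynomial.le_natDegree_of_mem_supp i hi)

lemma intInt_aux (u : ℝ → ℝ) (hu : Measurable u) (M : ℝ) (hbd : ∀ t, ‖u t‖ ≤ M)
    (P : Polynomial ℝ) (a b : ℝ) :
    IntervalIntegrable (fun t => u t * P.eval t) volume a b := by
  rw [intervalIntegrable_iff]
  obtain ⟨C, hC⟩ := (isCompact_uIcc (a := a) (b := b)).exists_bound_of_continuousOn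
    (P.continuous_aeval.continuousOn)
  apply Measure.integrableOn_of_bounded (M := M * C)
  · exact (measure_Ioc_lt_top).ne
  · exact (hu.mul P.continuous.measurable).aestronglyMeasurable
  · filter_upwards [ae_restrict_mem measurableSet_uIoc] with t ht
    have h1 : ‖P.eval t‖ ≤ C := by
      have := hC t (Set.uIoc_subset_uIcc ht)
      simpa using this
    calc ‖u t * P.eval t‖ = ‖u t‖ * ‖P.eval t‖ := norm_mul _ _
      _ ≤ M * C := mul_le_mul (hbd t) h1 (norm_nonneg _) ((norm_nonneg (u t)).trans (hbd t))

lemma orth_aux (w : ℝ → ℝ) (hw : Measurable w) (M : ℝ) (hbd : ∀ t, ‖w t‖ ≤ M)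
    (L : ℕ → Polynomial ℝ) (hmonic : ∀ k, (L k).Monic) (hdeg : ∀ k, (L k).natDegree = k)
    (horth : ∀ j k, j ≠ k →
      ∫ x in (-1 : ℝ)..1, w x * (L j).eval x * (L k).eval x = 0)
    (n : ℕ) : ∀ P : Polynomial ℝ, P.degree < (n : WithBot ℕ) →
      ∫ x in (-1 : ℝ)..1, w x * (L n).eval x * P.eval x = 0 := by
  have main : ∀ m : ℕ, ∀ P : Polynomial ℝ, P.natDegree ≤ m → P.degree < (n : WithBot ℕ) →
      ∫ x in (-1 : ℝ)..1, w x * (L n).eval x * P.eval x = 0 := by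
    intro m
    induction m using Nat.strong_induction_on with
    | _ m ih =>
      intro P hPm hPn
      by_cases hP0 : P = 0
      · simp [hP0]
      set k := P.natDegree with hk
      have hkn : k < n := (Polynomial.natDegree_lt_iff_degree_lt hP0).mpr hPn
      set c := P.leadingCoeff with hc
      have hcne : c ≠ 0 := Polynomial.leadingCoeff_ne_zero.mpr hP0
      set Q : Polynomial ℝ := P - Polynomial.C c * L k with hQ
      have hLkdeg : (L k).degree = (k : WithBot ℕ) := by
        rw [Polynomial.degree_eq_natDegree (hmonic k).ne_zero, hdeg k]
      have hdegeq : P.degree = (Polynomial.C c * L k).degree := by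
        rw [Polynomial.degree_C_mul hcne, hLkdeg, Polynomial.degree_eq_natDegree hP0]
      have hlc : P.leadingCoeff = (Polynomial.C c * L k).leadingCoeff := by
        rw [Polynomial.leadingCoeff_mul, Polynomial.leadingCoeff_C, (hmonic k).leadingCoeff,
          mul_one]
      have hQdeg : Q.degree < P.degree := Polynomial.degree_sub_lt hdegeq hP0 hlc
      have hQdegn : Q.degree < (n : WithBot ℕ) := lt_trans hQdeg hPn
      have hQint : ∫ x in (-1 : ℝ)..1, w x * (L n).eval x * Q.eval x = 0 := by
        by_cases hQ0 : Q = 0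
        · simp [hQ0]
        · have h1 : Q.natDegree < k := by
            rw [Polynomial.natDegree_lt_iff_degree_lt (n := k) hQ0]
            rw [Polynomial.degree_eq_natDegree hP0] at hQdeg
            exact_mod_cast hQdeg
          exact ih Q.natDegree (lt_of_lt_of_le h1 hPm) Q le_rfl hQdegn
      have hLk : ∫ x in (-1 : ℝ)..1, w x * (L n).eval x * (L k).eval x = 0 :=
        horth n k hkn.ne'
      have hsplit : (fun x => w x * (L n).eval x * P.eval x)
          = fun x => c * (w x * (L n).eval x * (L k).eval x)
            + w x * (L n).eval x * Q.eval x := by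
        funext x
        have hPe : P.eval x = c * (L k).eval x + Q.eval x := by
          rw [hQ]; simp [Polynomial.eval_mul]
        rw [hPe]; ring
      have i1 : IntervalIntegrable
          (fun x => c * (w x * (L n).eval x * (L k).eval x)) volume (-1 : ℝ) 1 := by
        have := intInt_aux w hw M hbd (Polynomial.C c * (L n * L k)) (-1) 1
        have heq : (fun t => w t * (Polynomial.C c * (L n * L k)).eval t)
            = fun x => c * (w x * (L n).eval x * (L k).eval x) := by
          funext x; simp [Polynomial.eval_mul]; ring
        rwa [heq] at this
      have i2 : IntervalIntegrable
          (fun x => w x * (L n).eval x * Q.eval x) volume (-1 : ℝ) 1 := by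
        have := intInt_aux w hw M hbd (L n * Q) (-1) 1
        have heq : (fun t => w t * (L n * Q).eval t)
            = fun x => w x * (L n).eval x * Q.eval x := by
          funext x; simp [Polynomial.eval_mul]; ring
        rwa [heq] at this
      rw [hsplit, intervalIntegral.integral_add i1 i2, hQint,
        intervalIntegral.integral_const_mul, hLk]
      ring
  intro P hP
  exact main P.natDegree P le_rfl hP

/-- The piecewise constant coefficient on the reference interval. -/
noncomputable def betaHat (α βm βp : ℝ) (ξ : ℝ) : ℝ := if ξ ≤ α then βm else βp

theorem generalized_lobatto_orthogonal_to_low_degree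
    (α βm βp : ℝ) (hα : α ∈ Set.Ioo (-1 : ℝ) 1) (hβm : 0 < βm) (hβp : 0 < βp)
    (L : ℕ → Polynomial ℝ) (hmonic : ∀ k, (L k).Monic) (hdeg : ∀ k, (L k).natDegree = k)
    (horth : ∀ j k, j ≠ k →
      ∫ x in (-1 : ℝ)..1, (betaHat α βm βp x)⁻¹ * (L j).eval x * (L k).eval x = 0)
    (n : ℕ) (hn : 1 ≤ n) :
    ∀ v : Polynomial ℝ, v.degree < ((n - 1 : ℕ) : WithBot ℕ) →
      ∫ ξ in (-1 : ℝ)..1,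
        (∫ t in (-1 : ℝ)..ξ, (betaHat α βm βp t)⁻¹ * (L n).eval t) * v.eval ξ = 0 := by
  intro v hv
  by_cases hv0 : v = 0
  · simp [hv0]
  obtain ⟨hα1, hα2⟩ := hα
  set M : ℝ := max βm⁻¹ βp⁻¹ with hM
  set w : ℝ → ℝ := fun t => (betaHat α βm βp t)⁻¹ with hwdef
  have hwmeas : Measurable w := by
    apply Measurable.inv
    exact Measurable.ite measurableSet_Iic measurable_const measurable_const
  have hwbd : ∀ t, ‖w t‖ ≤ M := by
    intro t
    rw [hwdef]
    simp only [betaHat]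
    split_ifs with h
    · rw [Real.norm_eq_abs, abs_of_pos (inv_pos.mpr hβm)]; exact le_max_left _ _
    · rw [Real.norm_eq_abs, abs_of_pos (inv_pos.mpr hβp)]; exact le_max_right _ _
  set wR : ℝ → ℝ := fun t => (if t < α then βm else βp)⁻¹ with hwRdef
  have hwRmeas : Measurable wR :=
    (Measurable.ite measurableSet_Iio measurable_const measurable_const).inv
  have hwRbd : ∀ t, ‖wR t‖ ≤ M := by
    intro t
    rw [hwRdef]
    simp only
    split_ifs with h
    · rw [Real.norm_eq_abs, abs_of_pos (inv_pos.mpr hβm)]; exact le_max_left _ _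
    · rw [Real.norm_eq_abs, abs_of_pos (inv_pos.mpr hβp)]; exact le_max_right _ _
  have hwR_eq : ∀ t, t ≠ α → wR t = w t := by
    intro t ht
    rw [hwRdef, hwdef]
    simp only [betaHat]
    rcases lt_or_gt_of_ne ht with h | h
    · rw [if_pos h, if_pos h.le]
    · rw [if_neg (not_lt.mpr h.le), if_neg (not_le.mpr h)]
  -- key orthogonality
  have horthP := orth_aux w hwmeas M hwbd L hmonic hdeg horth n
  -- antiderivative V of v
  set A : Polynomial ℝ := antider v with hA
  set V : Polynomial ℝ := A - Polynomial.C (A.eval (-1)) with hVdef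
  have hVderiv : Polynomial.derivative V = v := by
    rw [hVdef]; simp [antider_deriv, hA]
  have hVm1 : V.eval (-1) = 0 := by simp [hVdef]
  have hVdeg : V.degree < (n : WithBot ℕ) := by
    have hvd : v.natDegree < n - 1 :=
      (Polynomial.natDegree_lt_iff_degree_lt hv0).mpr hv
    have h1 : A.degree ≤ ((v.natDegree + 1 : ℕ) : WithBot ℕ) := antider_degree v
    have h2 : V.degree ≤ ((v.natDegree + 1 : ℕ) : WithBot ℕ) := by
      rw [hVdef]
      refine (Polynomial.degree_sub_le _ _).trans (max_le h1 ?_)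
      exact Polynomial.degree_C_le.trans (by exact_mod_cast Nat.zero_le _)
    refine lt_of_le_of_lt h2 ?_
    exact_mod_cast (by omega : v.natDegree + 1 < n)
  -- the primitive φ
  set φ : ℝ → ℝ := fun ξ => ∫ t in (-1 : ℝ)..ξ, w t * (L n).eval t with hφdef
  have hIntn : ∀ a b : ℝ, IntervalIntegrable (fun t => w t * (L n).eval t) volume a b :=
    fun a b => intInt_aux w hwmeas M hwbd (L n) a b
  have hφcont : Continuous φ := intervalIntegral.continuous_primitive hIntn (-1)
  have hsm : StronglyMeasurable (fun t => w t * (L n).eval t) :=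
    (hwmeas.mul (L n).continuous.measurable).stronglyMeasurable
  have hφd : ∀ ξ : ℝ, ξ ≠ α → HasDerivAt φ (w ξ * (L n).eval ξ) ξ := by
    intro ξ hξ
    apply intervalIntegral.integral_hasDerivAt_right (hIntn (-1) ξ)
      hsm.stronglyMeasurableAtFilter
    rcases lt_or_gt_of_ne hξ with h | h
    · have hc : ContinuousAt (fun t => βm⁻¹ * (L n).eval t) ξ :=
        (continuous_const.mul (L n).continuous).continuousAt
      apply hc.congr
      filter_upwards [Iio_mem_nhds h] with t ht
      rw [hwdef]; simp only [betaHat]; rw [if_pos (le_of_lt ht)]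
    · have hc : ContinuousAt (fun t => βp⁻¹ * (L n).eval t) ξ :=
        (continuous_const.mul (L n).continuous).continuousAt
      apply hc.congr
      filter_upwards [Ioi_mem_nhds h] with t ht
      rw [hwdef]; simp only [betaHat]; rw [if_neg (not_le.mpr ht)]
  have hφdα : HasDerivWithinAt φ (βp⁻¹ * (L n).eval α) (Set.Ioi α) α := by
    have hb : Filter.Tendsto (fun t => w t * (L n).eval t) (nhdsWithin α (Set.Ioi α) ⊓ ae volume)
        (nhds (βp⁻¹ * (L n).eval α)) := by
      have hc : Filter.Tendsto (fun t => βp⁻¹ * (L n).eval t) (nhdsWithin α (Set.Ioi α))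
          (nhds (βp⁻¹ * (L n).eval α)) :=
        ((continuous_const.mul (L n).continuous).continuousAt).continuousWithinAt
      have hev : (fun t => βp⁻¹ * (L n).eval t) =ᶠ[nhdsWithin α (Set.Ioi α)]
          (fun t => w t * (L n).eval t) := by
        filter_upwards [self_mem_nhdsWithin] with t ht
        rw [hwdef]; simp only [betaHat]; rw [if_neg (not_le.mpr ht)]
      exact ((hc.congr' hev)).mono_left inf_le_left
    have := intervalIntegral.integral_hasDerivWithinAt_of_tendsto_ae_right
      (hIntn (-1) α) (s := Set.Ici α) (t := Set.Ioi α)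
      hsm.stronglyMeasurableAtFilter hb
    exact this.mono Set.Ioi_subset_Ici_self
  -- FTC for G = φ * V
  set g' : ℝ → ℝ := fun ξ => wR ξ * (L n).eval ξ * V.eval ξ + φ ξ * v.eval ξ with hg'def
  have hVd : ∀ x : ℝ, HasDerivAt (fun ξ => V.eval ξ) (v.eval x) x := by
    intro x
    have := V.hasDerivAt x
    rwa [hVderiv] at this
  have hderiv : ∀ x ∈ Set.Ioo (-1 : ℝ) 1,
      HasDerivWithinAt (fun ξ => φ ξ * V.eval ξ) (g' x) (Set.Ioi x) x := by
    intro x _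
    by_cases hxa : x = α
    · subst hxa
      have hx : wR x = βp⁻¹ := by rw [hwRdef]; simp
      have h1 : HasDerivWithinAt φ (wR x * (L n).eval x) (Set.Ioi x) x := by
        rw [hx]; exact hφdα
      exact h1.mul (hVd x).hasDerivWithinAt
    · have h1 := ((hφd x hxa).hasDerivWithinAt (s := Set.Ioi x))
      rw [← hwR_eq x hxa] at h1
      exact h1.mul (hVd x).hasDerivWithinAt
  have i1 : IntervalIntegrable (fun ξ => wR ξ * (L n).eval ξ * V.eval ξ) volume (-1 : ℝ) 1 := by
    have := intInt_aux wR hwRmeas M hwRbd (L n * V) (-1) 1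
    have heq : (fun t => wR t * (L n * V).eval t)
        = fun ξ => wR ξ * (L n).eval ξ * V.eval ξ := by
      funext x; simp [Polynomial.eval_mul]; ring
    rwa [heq] at this
  have i2 : IntervalIntegrable (fun ξ => φ ξ * v.eval ξ) volume (-1 : ℝ) 1 :=
    (hφcont.mul v.continuous).intervalIntegrable _ _
  have key := intervalIntegral.integral_eq_sub_of_hasDeriv_right_of_le
    (by norm_num : (-1 : ℝ) ≤ 1)
    ((hφcont.mul V.continuous).continuousOn)
    hderiv (i1.add i2)
  -- evaluate boundary terms
  have hφm1 : φ (-1) = 0 := intervalIntegral.integral_same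
  have hφ1 : φ 1 = 0 := by
    have hL0 : L 0 = 1 := (hmonic 0).natDegree_eq_zero.mp (hdeg 0)
    have h0 := horth n 0 (by omega)
    rw [hφdef]
    simp only
    rw [← h0]
    apply intervalIntegral.integral_congr
    intro x _
    rw [hL0]; simp [hwdef]
  rw [Pi.mul_apply, Pi.mul_apply, hφ1, hφm1, hVm1] at key
  -- split the integral
  rw [intervalIntegral.integral_add i1 i2] at key
  have hcongr : ∫ ξ in (-1 : ℝ)..1, wR ξ * (L n).eval ξ * V.eval ξ
      = ∫ ξ in (-1 : ℝ)..1, w ξ * (L n).eval ξ * V.eval ξ := by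
    apply intervalIntegral.integral_congr_ae
    have hae : ∀ᵐ x : ℝ, x ≠ α := by
      have : (volume : Measure ℝ) {α} = 0 := measure_singleton α
      filter_upwards [compl_mem_ae_iff.mpr this] with x hx
      simpa using hx
    filter_upwards [hae] with x hx _
    rw [hwR_eq x hx]
  rw [hcongr, horthP V hVdeg] at key
  have : ∫ ξ in (-1 : ℝ)..1, φ ξ * v.eval ξ = 0 := by linarith [key]
  exact this
end

section
/- Under the hypotheses of the preceding statement (pure diffusion interface problem, Galerkin solution u_h in the IFE space S_p with p ≥ 1, and I_h u the Ritz-type interpolant satisfying the energy orthogonality elementwise), the IFE solution is exact at all mesh points: (u - u_h)(x_i) = 0 for i = 0, 1, …, N. -/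
open MeasureTheory intervalIntegral

open Set



lemma aux_ftc_exc {αp p q : ℝ} {g f : ℝ → ℝ} (hpq : p ≤ q)
    (hg : ContinuousOn g (Set.Icc p q))
    (hd : ∀ x ∈ Set.Ioo p q, x ≠ αp → HasDerivAt g (-(f x)) x)
    (hfi : IntervalIntegrable f volume p q) :
    g q - g p = -∫ x in p..q, f x := by
  have key : ∀ r s : ℝ, p ≤ r → r ≤ s → s ≤ q → (αp ∉ Set.Ioo r s) →
      IntervalIntegrable f volume r s → g s - g r = -∫ x in r..s, f x := by
    intro r s hpr hrs hsq hno hfi'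
    have h := intervalIntegral.integral_eq_sub_of_hasDeriv_right_of_le hrs
      (hg.mono (Set.Icc_subset_Icc hpr hsq))
      (fun x hx => ((hd x ⟨lt_of_le_of_lt hpr hx.1, lt_of_lt_of_le hx.2 hsq⟩
        (by rintro rfl; exact hno hx)).hasDerivWithinAt))
      hfi'.neg
    rw [intervalIntegral.integral_neg] at h
    linarith
  rcases le_or_gt αp p with h | h
  · exact key p q le_rfl hpq le_rfl (fun hx => absurd h (not_le.2 hx.1)) hfi
  rcases le_or_gt q αp with h' | h'
  · exact key p q le_rfl hpq le_rfl (fun hx => absurd h' (not_le.2 hx.2)) hfi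
  · have i1 : IntervalIntegrable f volume p αp :=
      hfi.mono_set (by rw [Set.uIcc_of_le hpq, Set.uIcc_of_le h.le]
                       exact Set.Icc_subset_Icc le_rfl h'.le)
    have i2 : IntervalIntegrable f volume αp q :=
      hfi.mono_set (by rw [Set.uIcc_of_le hpq, Set.uIcc_of_le h'.le]
                       exact Set.Icc_subset_Icc h.le le_rfl)
    have k1 := key p αp le_rfl h.le h'.le (fun hx => lt_irrefl _ hx.2) i1
    have k2 := key αp q h.le h'.le le_rfl (fun hx => lt_irrefl _ hx.1) i2
    have hadd := intervalIntegral.integral_add_adjacent_intervals i1 i2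
    linarith


lemma aux_fubini {p q : ℝ} {f w : ℝ → ℝ}
    (hf : IntegrableOn f (Set.Ioc p q)) (hw : IntegrableOn w (Set.Ioc p q)) :
    ∫ t in Set.Ioc p q, (∫ s in Set.Ioc t q, f s) * w t
      = ∫ s in Set.Ioc p q, f s * (∫ t in Set.Ioo p s, w t) := by
  set μ := volume.restrict (Set.Ioc p q) with hμ
  set F : ℝ → ℝ → ℝ := fun t s => if t < s then f s * w t else 0 with hF
  have hmeas : MeasurableSet {z : ℝ × ℝ | z.1 < z.2} :=
    measurableSet_lt measurable_fst measurable_snd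
  have hint : Integrable (Function.uncurry F) (μ.prod μ) := by
    have h1 : Integrable (fun z : ℝ × ℝ => w z.1 * f z.2) (μ.prod μ) :=
      Integrable.mul_prod hw hf
    have h2 : Integrable (fun z : ℝ × ℝ => f z.2 * w z.1) (μ.prod μ) := by
      simpa [mul_comm] using h1
    have h3 := h2.indicator (s := {z : ℝ × ℝ | z.1 < z.2}) hmeas
    apply h3.congr
    filter_upwards with z
    simp only [Function.uncurry, hF, Set.indicator_apply, Set.mem_setOf_eq]
  have hswap := MeasureTheory.integral_integral_swap hint
  have hleft : ∀ t ∈ Set.Ioc p q, (∫ s, F t s ∂μ) = (∫ s in Set.Ioc t q, f s) * w t := by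
    intro t ht
    have e1 : (fun s => F t s) = (Set.Ioi t).indicator (fun s => f s * w t) := by
      funext s
      simp only [hF, Set.indicator_apply, Set.mem_Ioi]
    rw [e1, hμ, MeasureTheory.integral_indicator measurableSet_Ioi,
      MeasureTheory.Measure.restrict_restrict measurableSet_Ioi]
    have e2 : Set.Ioi t ∩ Set.Ioc p q = Set.Ioc t q := by
      ext s
      simp only [Set.mem_inter_iff, Set.mem_Ioi, Set.mem_Ioc]
      constructor
      · rintro ⟨h1, _, h3⟩; exact ⟨h1, h3⟩
      · rintro ⟨h1, h2⟩; exact ⟨h1, lt_of_le_of_lt ht.1.le h1, h2⟩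
    rw [e2, MeasureTheory.integral_mul_const]
  have hright : ∀ s ∈ Set.Ioc p q, (∫ t, F t s ∂μ) = f s * (∫ t in Set.Ioo p s, w t) := by
    intro s hs
    have e1 : (fun t => F t s) = (Set.Iio s).indicator (fun t => f s * w t) := by
      funext t
      simp only [hF, Set.indicator_apply, Set.mem_Iio]
    rw [e1, hμ, MeasureTheory.integral_indicator measurableSet_Iio,
      MeasureTheory.Measure.restrict_restrict measurableSet_Iio]
    have e2 : Set.Iio s ∩ Set.Ioc p q = Set.Ioo p s := by
      ext t
      simp only [Set.mem_inter_iff, Set.mem_Iio, Set.mem_Ioc, Set.mem_Ioo]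
      constructor
      · rintro ⟨h1, h2, _⟩; exact ⟨h2, h1⟩
      · rintro ⟨h1, h2⟩; exact ⟨h2, h1, le_trans h2.le hs.2⟩
    rw [e2, MeasureTheory.integral_const_mul]
  calc ∫ t in Set.Ioc p q, (∫ s in Set.Ioc t q, f s) * w t
      = ∫ t, (∫ s, F t s ∂μ) ∂μ := by
        refine (setIntegral_congr_fun measurableSet_Ioc ?_).symm
        intro t ht; exact hleft t ht
    _ = ∫ s, (∫ t, F t s ∂μ) ∂μ := hswap
    _ = ∫ s in Set.Ioc p q, f s * (∫ t in Set.Ioo p s, w t) := by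
        refine setIntegral_congr_fun measurableSet_Ioc ?_
        intro s hs; exact hright s hs

lemma aux_ibp {p q αp : ℝ} {g f v v' : ℝ → ℝ} (hpq : p ≤ q)
    (hg : ContinuousOn g (Set.Icc p q))
    (hd : ∀ x ∈ Set.Ioo p q, x ≠ αp → HasDerivAt g (-(f x)) x)
    (hfi : IntegrableOn f (Set.Icc p q))
    (hv'i : IntegrableOn v' (Set.Icc p q))
    (hrep : ∀ x ∈ Set.Icc p q, v x = v p + ∫ t in p..x, v' t)
    (hgv' : IntegrableOn (fun x => g x * v' x) (Set.Ioc p q))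
    (hfv : IntegrableOn (fun x => f x * v x) (Set.Ioc p q)) :
    ∫ x in Set.Ioc p q, (g x * v' x - f x * v x) = g q * v q - g p * v p := by
  have hfii : IntervalIntegrable f volume p q := by
    rw [intervalIntegrable_iff, Set.uIoc_of_le hpq]
    exact hfi.mono_set Set.Ioc_subset_Icc_self
  have hv'ii : IntervalIntegrable v' volume p q := by
    rw [intervalIntegrable_iff, Set.uIoc_of_le hpq]
    exact hv'i.mono_set Set.Ioc_subset_Icc_self
  have hsubII : ∀ x ∈ Set.Icc p q, IntervalIntegrable f volume p x ∧
      IntervalIntegrable f volume x q ∧ IntervalIntegrable v' volume p x := by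
    intro x hx
    refine ⟨hfii.mono_set ?_, hfii.mono_set ?_, hv'ii.mono_set ?_⟩ <;>
      rw [Set.uIcc_of_le hpq] <;>
      [rw [Set.uIcc_of_le hx.1]; rw [Set.uIcc_of_le hx.2]; rw [Set.uIcc_of_le hx.1]] <;>
      exact Set.Icc_subset_Icc (by simp [hx.1, hx.2]) (by simp [hx.1, hx.2])
  -- FTC for g on subintervals [t, q]
  have hftc : ∀ t ∈ Set.Icc p q, g t = g q + ∫ s in t..q, f s := by
    intro t ht
    have h := aux_ftc_exc (αp := αp) ht.2 (hg.mono (Set.Icc_subset_Icc ht.1 le_rfl))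
      (fun x hx hxα => hd x ⟨lt_of_le_of_lt ht.1 hx.1, hx.2⟩ hxα)
      (hsubII t ht).2.1
    linarith
  -- value of v via primitive
  have hvsub : ∀ x ∈ Set.Icc p q, v x - v p = ∫ t in Set.Ioo p x, v' t := by
    intro x hx
    rw [← MeasureTheory.integral_Ioc_eq_integral_Ioo,
      ← intervalIntegral.integral_of_le hx.1]
    have := hrep x hx; linarith
  -- rewrite g in the integral
  have step2 : ∫ x in Set.Ioc p q, g x * v' x
      = ∫ x in Set.Ioc p q, (g q + ∫ s in x..q, f s) * v' x := by
    refine setIntegral_congr_fun measurableSet_Ioc (fun x hx => ?_)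
    rw [← hftc x (Set.Ioc_subset_Icc_self hx)]
  have hcont_prim : ContinuousOn (fun x => ∫ s in x..q, f s) (Set.Icc p q) := by
    have h := intervalIntegral.continuousOn_primitive_interval_left
      (a := p) (b := q) (f := f) (μ := volume)
      (by rw [Set.uIcc_of_le hpq]; exact hfi)
    rwa [Set.uIcc_of_le hpq] at h
  have hprim_int : IntegrableOn (fun x => (∫ s in x..q, f s) * v' x) (Set.Ioc p q) := by
    obtain ⟨C, hC⟩ : ∃ C, ∀ x ∈ Set.Icc p q, ‖(∫ s in x..q, f s)‖ ≤ C :=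
      IsCompact.exists_bound_of_continuousOn isCompact_Icc hcont_prim
    refine Integrable.mono' ((hv'i.mono_set Set.Ioc_subset_Icc_self).norm.const_mul C)
      (ContinuousOn.aestronglyMeasurable (hcont_prim.mono Set.Ioc_subset_Icc_self)
        measurableSet_Ioc |>.mul
        ((hv'i.mono_set Set.Ioc_subset_Icc_self).aestronglyMeasurable)) ?_
    filter_upwards [ae_restrict_mem measurableSet_Ioc] with x hx
    rw [norm_mul]
    exact mul_le_mul_of_nonneg_right (hC x (Set.Ioc_subset_Icc_self hx)) (norm_nonneg _)
  have hconst_int : IntegrableOn (fun x => g q * v' x) (Set.Ioc p q) :=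
    (hv'i.mono_set Set.Ioc_subset_Icc_self).const_mul _
  -- split the g-part
  have step3 : ∫ x in Set.Ioc p q, (g q + ∫ s in x..q, f s) * v' x
      = g q * (v q - v p) + ∫ x in Set.Ioc p q, (∫ s in x..q, f s) * v' x := by
    have e : ∀ x, (g q + ∫ s in x..q, f s) * v' x
        = g q * v' x + (∫ s in x..q, f s) * v' x := fun x => by ring
    simp_rw [e]
    rw [MeasureTheory.integral_add hconst_int hprim_int, MeasureTheory.integral_const_mul]
    congr 1
    rw [MeasureTheory.integral_Ioc_eq_integral_Ioo]
    rw [(hvsub q ⟨hpq, le_rfl⟩).symm]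
  -- Fubini on the middle term
  have step4 : ∫ x in Set.Ioc p q, (∫ s in x..q, f s) * v' x
      = ∫ s in Set.Ioc p q, f s * (v s - v p) := by
    have h1 : ∫ x in Set.Ioc p q, (∫ s in x..q, f s) * v' x
        = ∫ x in Set.Ioc p q, (∫ s in Set.Ioc x q, f s) * v' x := by
      refine setIntegral_congr_fun measurableSet_Ioc (fun x hx => ?_)
      rw [intervalIntegral.integral_of_le hx.2]
    rw [h1, aux_fubini (hfi.mono_set Set.Ioc_subset_Icc_self)
      (hv'i.mono_set Set.Ioc_subset_Icc_self)]
    refine setIntegral_congr_fun measurableSet_Ioc (fun s hs => ?_)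
    rw [← hvsub s (Set.Ioc_subset_Icc_self hs)]
  -- value of ∫ f over [p,q]
  have step5 : ∫ s in Set.Ioc p q, f s = g p - g q := by
    have h := hftc p ⟨le_rfl, hpq⟩
    rw [← intervalIntegral.integral_of_le hpq]
    linarith
  -- assemble
  have hsplit : ∫ x in Set.Ioc p q, (g x * v' x - f x * v x)
      = (∫ x in Set.Ioc p q, g x * v' x) - ∫ x in Set.Ioc p q, f x * v x :=
    MeasureTheory.integral_sub hgv' hfv
  have hfvp : ∫ s in Set.Ioc p q, f s * (v s - v p)
      = (∫ s in Set.Ioc p q, f s * v s) - v p * ∫ s in Set.Ioc p q, f s := by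
    have e : ∀ s, f s * (v s - v p) = f s * v s - v p * f s := fun s => by ring
    simp_rw [e]
    rw [MeasureTheory.integral_sub hfv ((hfi.mono_set Set.Ioc_subset_Icc_self).const_mul _),
      MeasureTheory.integral_const_mul]
  rw [hsplit, step2, step3, step4, hfvp, step5]
  ring


lemma aux_component {W : Set ℝ} (hWo : IsOpen W) {s t : ℝ} (hWsub : W ⊆ Set.Ioo s t)
    {x : ℝ} (hx : x ∈ W) :
    ∃ c d : ℝ, s ≤ c ∧ c < x ∧ x < d ∧ d ≤ t ∧ c ∉ W ∧ d ∉ W ∧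
      connectedComponentIn W x = Set.Ioo c d := by
  set C := connectedComponentIn W x with hC
  have hCo : IsOpen C := hWo.connectedComponentIn
  have hCsub : C ⊆ W := connectedComponentIn_subset W x
  have hxC : x ∈ C := mem_connectedComponentIn hx
  have hCpre : IsPreconnected C := isPreconnected_connectedComponentIn
  have hOC : Set.OrdConnected C := hCpre.ordConnected
  have hbdd_b : BddBelow C := ⟨s, fun y hy => (hWsub (hCsub hy)).1.le⟩
  have hbdd_a : BddAbove C := ⟨t, fun y hy => (hWsub (hCsub hy)).2.le⟩
  have hne : C.Nonempty := ⟨x, hxC⟩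
  set c := sInf C with hc
  set d := sSup C with hd
  have hcx : c ≤ x := csInf_le hbdd_b hxC
  have hxd : x ≤ d := le_csSup hbdd_a hxC
  have hsc : s ≤ c := le_csInf hne fun y hy => (hWsub (hCsub hy)).1.le
  have hdt : d ≤ t := csSup_le hne fun y hy => (hWsub (hCsub hy)).2.le
  -- endpoints not in W
  have hcW : c ∉ W := by
    intro hcWmem
    obtain ⟨ε, hε, hball⟩ := Metric.isOpen_iff.1 hWo c hcWmem
    rw [Real.ball_eq_Ioo] at hball
    obtain ⟨y, hyC, hy⟩ := (csInf_lt_iff hbdd_b hne).1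
      (show c < c + ε by linarith)
    have hyball : y ∈ Set.Ioo (c - ε) (c + ε) :=
      ⟨by have := csInf_le hbdd_b hyC; simp only [← hc] at this; linarith, hy⟩
    have hub : Set.Ioo (c - ε) (c + ε) ∪ C ⊆ connectedComponentIn W y := by
      apply IsPreconnected.subset_connectedComponentIn
      · exact (isPreconnected_Ioo).union y hyball hyC hCpre
      · exact Or.inl hyball
      · exact Set.union_subset hball hCsub
    have hcomp_eq : connectedComponentIn W y = C := by
      rw [hC]; exact (connectedComponentIn_eq hyC).symm
    have hmem : c - ε / 2 ∈ C := by
      rw [← hcomp_eq]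
      exact hub (Or.inl ⟨by linarith, by linarith⟩)
    have := csInf_le hbdd_b hmem
    simp only [← hc] at this
    linarith
  have hdW : d ∉ W := by
    intro hdWmem
    obtain ⟨ε, hε, hball⟩ := Metric.isOpen_iff.1 hWo d hdWmem
    rw [Real.ball_eq_Ioo] at hball
    obtain ⟨y, hyC, hy⟩ := (lt_csSup_iff hbdd_a hne).1
      (show d - ε < d by linarith)
    have hyball : y ∈ Set.Ioo (d - ε) (d + ε) :=
      ⟨hy, by have := le_csSup hbdd_a hyC; simp only [← hd] at this; linarith⟩
    have hub : Set.Ioo (d - ε) (d + ε) ∪ C ⊆ connectedComponentIn W y := by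
      apply IsPreconnected.subset_connectedComponentIn
      · exact (isPreconnected_Ioo).union y hyball hyC hCpre
      · exact Or.inl hyball
      · exact Set.union_subset hball hCsub
    have hcomp_eq : connectedComponentIn W y = C := by
      rw [hC]; exact (connectedComponentIn_eq hyC).symm
    have hmem : d + ε / 2 ∈ C := by
      rw [← hcomp_eq]
      exact hub (Or.inl ⟨by linarith, by linarith⟩)
    have := le_csSup hbdd_a hmem
    simp only [← hd] at this
    linarith
  have hcC : c ∉ C := fun h => hcW (hCsub h)
  have hdC : d ∉ C := fun h => hdW (hCsub h)
  have hceq : C = Set.Ioo c d := by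
    apply Set.Subset.antisymm
    · intro y hy
      have h1 : c ≤ y := csInf_le hbdd_b hy
      have h2 : y ≤ d := le_csSup hbdd_a hy
      refine ⟨h1.lt_of_ne ?_, h2.lt_of_ne ?_⟩
      · rintro rfl; exact hcC hy
      · rintro rfl; exact hdC hy
    · intro z hz
      obtain ⟨y1, hy1C, hy1⟩ := (csInf_lt_iff hbdd_b hne).1 hz.1
      obtain ⟨y2, hy2C, hy2⟩ := (lt_csSup_iff hbdd_a hne).1 hz.2
      exact hOC.out hy1C hy2C ⟨hy1.le, hy2.le⟩
  refine ⟨c, d, hsc, ?_, ?_, hdt, hcW, hdW, hceq⟩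
  · have := hceq ▸ hxC; exact this.1
  · have := hceq ▸ hxC; exact this.2
lemma aux_comp {W : Set ℝ} (hWo : IsOpen W) {s t : ℝ} (hWsub : W ⊆ Set.Ioo s t)
    {ψ Φ : ℝ → ℝ} (hψ : IntegrableOn ψ W)
    (hloc : ∀ p q, p ≤ q → Set.Icc p q ⊆ W → ∫ x in Set.Ioc p q, ψ x = Φ q - Φ p)
    (hΦ : ContinuousOn Φ (Set.Icc s t))
    (hΦ0 : ∀ x ∈ Set.Icc s t, x ∉ W → Φ x = 0) :
    ∫ x in W, ψ x = 0 := by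
  rcases Set.eq_empty_or_nonempty W with hWe | ⟨x₀, hx₀⟩
  · rw [hWe]; simp
  have hst : s ≤ t := by
    have := hWsub hx₀; linarith [this.1, this.2]
  -- per-component vanishing
  have hcomp0 : ∀ x ∈ W, ∫ y in connectedComponentIn W x, ψ y = 0 := by
    intro x hx
    obtain ⟨c, d, hsc, hcx, hxd, hdt, hcW, hdW, hCeq⟩ := aux_component hWo hWsub hx
    have hcd : c < d := hcx.trans hxd
    have hCsubW : Set.Ioo c d ⊆ W := hCeq ▸ connectedComponentIn_subset W x
    rw [hCeq]
    -- approximating sequence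
    set e : ℕ → ℝ := fun n => (d - c) / (n + 2) with he
    have he_pos : ∀ n, 0 < e n := fun n => by
      apply div_pos (by linarith) (by positivity)
    have he_anti : ∀ m n, m ≤ n → e n ≤ e m := fun m n hmn => by
      apply div_le_div_of_nonneg_left (by linarith) (by positivity) (by exact_mod_cast by omega)
    have hpq : ∀ n, c + e n ≤ d - e n := by
      intro n
      have : e n ≤ (d - c) / 2 := by
        rw [he]
        apply div_le_div_of_nonneg_left (by linarith) (by norm_num) (by exact_mod_cast by omega)
      linarith
    set A : ℕ → Set ℝ := fun n => Set.Ioc (c + e n) (d - e n) with hA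
    have hmono : Monotone A := by
      intro m n hmn
      exact Set.Ioc_subset_Ioc (by linarith [he_anti m n hmn]) (by linarith [he_anti m n hmn])
    have hsub_n : ∀ n, Set.Icc (c + e n) (d - e n) ⊆ Set.Ioo c d := fun n =>
      Set.Icc_subset_Ioo (by linarith [he_pos n]) (by linarith [he_pos n])
    have hunion : (⋃ n, A n) = Set.Ioo c d := by
      apply Set.Subset.antisymm
      · exact Set.iUnion_subset fun n =>
          (Set.Ioc_subset_Icc_self).trans (hsub_n n)
      · intro z hz
        obtain ⟨n, hn⟩ := exists_nat_gt ((d - c) / min (z - c) (d - z))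
        have hminpos : 0 < min (z - c) (d - z) := by
          apply lt_min (by linarith [hz.1]) (by linarith [hz.2])
        have hen : e n < min (z - c) (d - z) := by
          rw [he, div_lt_iff₀ (by positivity)]
          rw [div_lt_iff₀ hminpos] at hn
          nlinarith [hminpos]
        refine Set.mem_iUnion.2 ⟨n, ?_, ?_⟩
        · have := hen.trans_le (min_le_left _ _); linarith
        · have := hen.trans_le (min_le_right _ _); linarith
    have hintOn : IntegrableOn ψ (⋃ n, A n) := by
      rw [hunion]; exact hψ.mono_set hCsubW
    have htend := MeasureTheory.tendsto_setIntegral_of_monotone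
      (fun n => measurableSet_Ioc) hmono hintOn
    rw [hunion] at htend
    -- values along the sequence
    have hvals : ∀ n, ∫ y in A n, ψ y = Φ (d - e n) - Φ (c + e n) := fun n =>
      hloc _ _ (hpq n) ((hsub_n n).trans hCsubW)
    -- limits of endpoints
    have hetend : Filter.Tendsto e Filter.atTop (nhds 0) := by
      rw [he]
      have : Filter.Tendsto (fun n : ℕ => ((n : ℝ) + 2)) Filter.atTop Filter.atTop := by
        apply Filter.tendsto_atTop_add_const_right
        exact tendsto_natCast_atTop_atTop
      simpa using Filter.Tendsto.div_atTop tendsto_const_nhds this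
    have hmem_seq : ∀ n, c + e n ∈ Set.Icc s t ∧ d - e n ∈ Set.Icc s t := by
      intro n
      have h1 := hsub_n n
      have h2 : c + e n ∈ Set.Ioo c d := h1 ⟨le_rfl, hpq n⟩
      have h3 : d - e n ∈ Set.Ioo c d := h1 ⟨hpq n, le_rfl⟩
      exact ⟨⟨by linarith [h2.1], by linarith [h2.2]⟩, ⟨by linarith [h3.1], by linarith [h3.2]⟩⟩
    have htendc : Filter.Tendsto (fun n => Φ (c + e n)) Filter.atTop (nhds (Φ c)) := by
      have hc_mem : c ∈ Set.Icc s t := ⟨hsc, by linarith⟩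
      refine ((hΦ.continuousWithinAt hc_mem).tendsto).comp ?_
      rw [tendsto_nhdsWithin_iff]
      constructor
      · have : Filter.Tendsto (fun n => c + e n) Filter.atTop (nhds (c + 0)) :=
          tendsto_const_nhds.add hetend
        simpa using this
      · filter_upwards with n using (hmem_seq n).1
    have htendd : Filter.Tendsto (fun n => Φ (d - e n)) Filter.atTop (nhds (Φ d)) := by
      have hd_mem : d ∈ Set.Icc s t := ⟨by linarith, hdt⟩
      refine ((hΦ.continuousWithinAt hd_mem).tendsto).comp ?_
      rw [tendsto_nhdsWithin_iff]
      constructor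
      · have : Filter.Tendsto (fun n => d - e n) Filter.atTop (nhds (d - 0)) :=
          tendsto_const_nhds.sub hetend
        simpa using this
      · filter_upwards with n using (hmem_seq n).2
    have hlim2 : Filter.Tendsto (fun n => ∫ y in A n, ψ y) Filter.atTop
        (nhds (Φ d - Φ c)) := by
      simp_rw [hvals]
      exact htendd.sub htendc
    have := tendsto_nhds_unique htend hlim2
    rw [this, hΦ0 c ⟨hsc, by linarith⟩ hcW, hΦ0 d ⟨by linarith, hdt⟩ hdW]
    ring
  -- countable family of components
  set 𝒞 : Set (Set ℝ) := {C | ∃ x ∈ W, C = connectedComponentIn W x} with h𝒞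
  have hcount : 𝒞.Countable := by
    apply Set.Countable.mono _ (Set.countable_range
      (fun q : ℚ => connectedComponentIn W (q : ℝ)))
    rintro C ⟨x, hxW, rfl⟩
    have hCo : IsOpen (connectedComponentIn W x) := hWo.connectedComponentIn
    have hne : (connectedComponentIn W x).Nonempty := ⟨x, mem_connectedComponentIn hxW⟩
    obtain ⟨q, hq⟩ := Rat.denseRange_cast.exists_mem_open hCo hne
    exact ⟨q, ((connectedComponentIn_eq hq).symm)⟩
  haveI : Countable ↥𝒞 := hcount.to_subtype
  have hunionW : (⋃ C : ↥𝒞, (C : Set ℝ)) = W := by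
    apply Set.Subset.antisymm
    · rintro y hy
      obtain ⟨_, ⟨⟨C, hC⟩, rfl⟩, hyC⟩ := hy
      obtain ⟨x, hxW, rfl⟩ := hC
      exact connectedComponentIn_subset W x hyC
    · intro y hy
      exact Set.mem_iUnion.2 ⟨⟨connectedComponentIn W y, ⟨y, hy, rfl⟩⟩,
        mem_connectedComponentIn hy⟩
  have hmeas : ∀ C : ↥𝒞, MeasurableSet (C : Set ℝ) := by
    rintro ⟨C, ⟨x, hxW, rfl⟩⟩
    exact (hWo.connectedComponentIn).measurableSet
  have hdisj : Pairwise (Function.onFun Disjoint (fun C : ↥𝒞 => (C : Set ℝ))) := by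
    rintro ⟨C₁, ⟨x₁, hx₁, rfl⟩⟩ ⟨C₂, ⟨x₂, hx₂, rfl⟩⟩ hne
    rw [Function.onFun]
    by_contra hnd
    obtain ⟨z, hz₁, hz₂⟩ := Set.not_disjoint_iff.1 hnd
    apply hne
    apply Subtype.ext
    simp only
    rw [connectedComponentIn_eq hz₁, connectedComponentIn_eq hz₂]
  have hint : IntegrableOn ψ (⋃ C : ↥𝒞, (C : Set ℝ)) := by rw [hunionW]; exact hψ
  rw [← hunionW, MeasureTheory.integral_iUnion hmeas hdisj hint]
  have : ∀ C : ↥𝒞, ∫ y in (C : Set ℝ), ψ y = 0 := by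
    rintro ⟨C, ⟨x, hxW, rfl⟩⟩
    exact hcomp0 x hxW
  simp_rw [this]
  exact tsum_zero


lemma aux_cells {a b : ℝ} (hab : a ≤ b) {g h : ℝ → ℝ}
    (hg : ContinuousOn g (Set.Icc a b))
    (hh : IntervalIntegrable h volume a b)
    (h0 : ∀ x y, a ≤ x → x ≤ y → y ≤ b → ∫ t in x..y, h t = 0) :
    ∫ t in a..b, g t * h t = 0 := by
  rcases eq_or_lt_of_le hab with rfl | hab'
  · simp
  -- boundedness of g
  obtain ⟨K, hK⟩ := IsCompact.exists_bound_of_continuousOn isCompact_Icc hg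
  have hgm : AEStronglyMeasurable g (volume.restrict (Set.Icc a b)) :=
    hg.aestronglyMeasurable measurableSet_Icc
  have hsubh : ∀ x y, a ≤ x → x ≤ y → y ≤ b → IntervalIntegrable h volume x y := by
    intro x y hax hxy hyb
    have : Set.uIcc x y ⊆ Set.uIcc a b := by
      rw [Set.uIcc_of_le hab, Set.uIcc_of_le hxy]
      exact Set.Icc_subset_Icc hax hyb
    exact hh.mono_set this
  -- integrability of g * h on all subintervals of [a, b]
  have hgh : ∀ x y, a ≤ x → x ≤ y → y ≤ b →
      IntervalIntegrable (fun t => g t * h t) volume x y := by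
    intro x y hax hxy hyb
    rw [intervalIntegrable_iff, Set.uIoc_of_le hxy]
    have hhs : IntegrableOn h (Set.Ioc x y) := by
      have := hsubh x y hax hxy hyb
      rw [intervalIntegrable_iff, Set.uIoc_of_le hxy] at this
      exact this
    have hsubset : Set.Ioc x y ⊆ Set.Icc a b := fun t ht =>
      Set.mem_Icc.2 ⟨le_trans hax ht.1.le, le_trans ht.2 hyb⟩
    refine Integrable.mono' (hhs.norm.const_mul K)
      ((hgm.mono_measure (Measure.restrict_mono hsubset le_rfl)).mul
        hhs.aestronglyMeasurable) ?_
    filter_upwards [ae_restrict_mem measurableSet_Ioc] with t ht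
    rw [norm_mul]
    exact mul_le_mul_of_nonneg_right (hK t (hsubset ht)) (norm_nonneg _)
  set I := ∫ t in a..b, g t * h t with hI
  set M := ∫ t in a..b, |h t| with hM
  have hM0 : 0 ≤ M := intervalIntegral.integral_nonneg hab (fun t _ => abs_nonneg _)
  -- the key estimate
  have key : ∀ ε > 0, |I| ≤ ε * M := by
    intro ε hε
    obtain ⟨δ, hδ, hδ'⟩ := (Metric.uniformContinuousOn_iff_le.1
      (isCompact_Icc.uniformContinuousOn_of_continuous hg)) ε hε
    obtain ⟨n, hn⟩ := exists_nat_gt ((b - a) / δ)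
    have hn0 : 0 < n := by
      by_contra hc
      push_neg at hc
      interval_cases n
      simp only [Nat.cast_zero] at hn
      nlinarith [div_pos (by linarith : (0:ℝ) < b - a) hδ]
    have hnpos : (0:ℝ) < n := by exact_mod_cast hn0
    set step := (b - a) / n with hstep
    have hsteppos : 0 < step := div_pos (by linarith) hnpos
    have hstepδ : step ≤ δ := by
      rw [hstep, div_le_iff₀ hnpos]
      rw [div_lt_iff₀ hδ] at hn
      nlinarith
    set T : ℕ → ℝ := fun i => a + i * step with hT
    have hT0 : T 0 = a := by simp [hT]
    have hTn : T n = b := by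
      rw [hT]; simp only
      rw [hstep]
      field_simp
      ring
    have hTmem : ∀ i, i ≤ n → T i ∈ Set.Icc a b := by
      intro i hi
      have hin : (i:ℝ) ≤ n := by exact_mod_cast hi
      constructor
      · rw [hT]; simp only
        nlinarith [Nat.cast_nonneg (α := ℝ) i, hsteppos]
      · rw [hT, ← hTn, hT]; simp only
        nlinarith
    have hTstep : ∀ i : ℕ, T (i + 1) - T i = step := by
      intro i; rw [hT]; push_cast; ring
    have hTle : ∀ i : ℕ, T i ≤ T (i + 1) := fun i => by
      have := hTstep i; linarith
    have hsum : ∑ i ∈ Finset.range n, ∫ t in T i..T (i + 1), g t * h t = I := by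
      rw [hI, ← hT0, ← hTn]
      apply intervalIntegral.sum_integral_adjacent_intervals
      intro k hk
      exact hgh _ _ (hTmem k (le_of_lt hk)).1 (hTle k) (hTmem (k+1) hk).2
    have hsumM : ∑ i ∈ Finset.range n, ∫ t in T i..T (i + 1), |h t| = M := by
      rw [hM, ← hT0, ← hTn]
      apply intervalIntegral.sum_integral_adjacent_intervals
      intro k hk
      exact (hsubh _ _ (hTmem k (le_of_lt hk)).1 (hTle k) (hTmem (k+1) hk).2).abs
    -- per-cell estimate
    have hcell : ∀ i, i < n → |∫ t in T i..T (i + 1), g t * h t|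
        ≤ ε * ∫ t in T i..T (i + 1), |h t| := by
      intro i hi
      have hmi := hTmem i (le_of_lt hi)
      have hmi1 := hTmem (i+1) hi
      have hii : IntervalIntegrable (fun t => g t * h t) volume (T i) (T (i+1)) :=
        hgh _ _ hmi.1 (hTle i) hmi1.2
      have hhi : IntervalIntegrable h volume (T i) (T (i+1)) :=
        hsubh _ _ hmi.1 (hTle i) hmi1.2
      have hsplit : ∫ t in T i..T (i + 1), g t * h t
          = ∫ t in T i..T (i + 1), (g t - g (T i)) * h t := by
        have e : ∀ t, (g t - g (T i)) * h t = g t * h t - g (T i) * h t :=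
          fun t => by ring
        simp_rw [e]
        rw [intervalIntegral.integral_sub hii (hhi.const_mul _),
          intervalIntegral.integral_const_mul,
          h0 _ _ hmi.1 (hTle i) hmi1.2]
        ring
      rw [hsplit]
      have habs1 : |∫ t in T i..T (i + 1), (g t - g (T i)) * h t|
          ≤ ∫ t in T i..T (i + 1), |(g t - g (T i)) * h t| :=
        intervalIntegral.abs_integral_le_integral_abs (hTle i)
      have hptwise : ∀ t ∈ Set.Icc (T i) (T (i+1)),
          |(g t - g (T i)) * h t| ≤ ε * |h t| := by
        intro t ht
        have htmem : t ∈ Set.Icc a b :=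
          ⟨le_trans hmi.1 ht.1, le_trans ht.2 hmi1.2⟩
        have hdist : dist t (T i) ≤ δ := by
          rw [Real.dist_eq, abs_of_nonneg (by linarith [ht.1])]
          have := hTstep i
          linarith [ht.2]
        have := hδ' t htmem (T i) hmi hdist
        rw [Real.dist_eq] at this
        rw [abs_mul]
        exact mul_le_mul_of_nonneg_right this (abs_nonneg _)
      have heqF : (fun t => g t * h t - g (T i) * h t)
          = (fun t => (g t - g (T i)) * h t) := by funext t; ring
      have hF : IntervalIntegrable (fun t => (g t - g (T i)) * h t) volume
          (T i) (T (i+1)) := heqF ▸ (hii.sub (hhi.const_mul (g (T i))))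
      have hmono := intervalIntegral.integral_mono_on (hTle i)
        hF.abs ((hhi.abs).const_mul ε) hptwise
      rw [intervalIntegral.integral_const_mul] at hmono
      exact le_trans habs1 hmono
    calc |I| = |∑ i ∈ Finset.range n, ∫ t in T i..T (i + 1), g t * h t| := by rw [hsum]
      _ ≤ ∑ i ∈ Finset.range n, |∫ t in T i..T (i + 1), g t * h t| :=
          Finset.abs_sum_le_sum_abs _ _
      _ ≤ ∑ i ∈ Finset.range n, ε * ∫ t in T i..T (i + 1), |h t| :=
          Finset.sum_le_sum (fun i hi => hcell i (Finset.mem_range.1 hi))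
      _ = ε * M := by rw [← Finset.mul_sum, hsumM]
  by_contra hne
  have hIpos : 0 < |I| := abs_pos.2 hne
  have h1 := key (|I| / (2 * (M + 1))) (by positivity)
  have : |I| / (2 * (M + 1)) * M < |I| := by
    rw [div_mul_eq_mul_div, div_lt_iff₀ (by positivity)]
    nlinarith
  linarith

lemma aux_weak {a b αp : ℝ} (hab : a ≤ b) {g f v : ℝ → ℝ}
    (hg : ContinuousOn g (Set.Icc a b))
    (hd : ∀ x ∈ Set.Ioo a b, x ≠ αp → HasDerivAt g (-(f x)) x)
    (hva : v a = 0) (hvb : v b = 0)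
    (hv : ContinuousOn v (Set.Icc a b))
    (hrep : ∀ x ∈ Set.Icc a b, v x = ∫ t in a..x, deriv v t)
    (hv'i : IntervalIntegrable (deriv v) volume a b)
    (hgv' : IntervalIntegrable (fun x => g x * deriv v x) volume a b)
    (hfvi : IntervalIntegrable (fun x => f x * v x) volume a b)
    (hfm : AEStronglyMeasurable f (volume.restrict (Set.Ioc a b))) :
    ∫ x in a..b, g x * deriv v x = ∫ x in a..b, f x * v x := by
  set v' := deriv v with hv'def
  have hIoc : ∀ {h : ℝ → ℝ}, IntervalIntegrable h volume a b →
      IntegrableOn h (Set.Ioc a b) := fun {h} hh => by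
    rwa [intervalIntegrable_iff, Set.uIoc_of_le hab] at hh
  have hv'Ioc : IntegrableOn v' (Set.Ioc a b) := hIoc hv'i
  have hgv'Ioc : IntegrableOn (fun x => g x * v' x) (Set.Ioc a b) := hIoc hgv'
  have hfvIoc : IntegrableOn (fun x => f x * v x) (Set.Ioc a b) := hIoc hfvi
  -- the open set where v is nonzero
  set U : Set ℝ := {x | x ∈ Set.Ioo a b ∧ v x ≠ 0} with hUdef
  have hUsub : U ⊆ Set.Ioo a b := fun x hx => hx.1
  have hUIoc : U ⊆ Set.Ioc a b := fun x hx => ⟨hx.1.1, hx.1.2.le⟩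
  have hUo : IsOpen U := by
    rw [isOpen_iff_mem_nhds]
    rintro x ⟨hx1, hx2⟩
    have hxa : ContinuousAt v x :=
      (hv.continuousWithinAt (Set.Ioo_subset_Icc_self hx1)).continuousAt
        (Filter.mem_of_superset (isOpen_Ioo.mem_nhds hx1) Set.Ioo_subset_Icc_self)
    have h2 : {y | v y ≠ 0} ∈ nhds x := by
      have := hxa.preimage_mem_nhds (compl_singleton_mem_nhds hx2)
      exact Filter.mem_of_superset this (fun y hy => hy)
    exact Filter.mem_of_superset
      (Filter.inter_mem (isOpen_Ioo.mem_nhds hx1) h2) (fun y hy => ⟨hy.1, hy.2⟩)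
  have hZv : ∀ x ∈ Set.Icc a b, x ∉ U → v x = 0 := by
    intro x hx hxU
    rcases eq_or_lt_of_le hx.1 with rfl | h1
    · exact hva
    rcases eq_or_lt_of_le hx.2 with h2 | h2
    · rw [h2]; exact hvb
    · by_contra hne; exact hxU ⟨⟨h1, h2⟩, hne⟩
  -- representation of differences of v
  have hvdiff : ∀ x y, x ∈ Set.Icc a b → y ∈ Set.Icc a b → x ≤ y →
      v y - v x = ∫ t in x..y, v' t := by
    intro x y hx hy hxy
    have hax : IntervalIntegrable v' volume a x := hv'i.mono_set (by
      rw [Set.uIcc_of_le hab, Set.uIcc_of_le hx.1]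
      exact Set.Icc_subset_Icc le_rfl hx.2)
    have hay : IntervalIntegrable v' volume a y := hv'i.mono_set (by
      rw [Set.uIcc_of_le hab, Set.uIcc_of_le hy.1]
      exact Set.Icc_subset_Icc le_rfl hy.2)
    rw [hrep y hy, hrep x hx]
    exact intervalIntegral.integral_interval_sub_left hay hax
  -- local exactness on intervals inside U
  have hloc : ∀ p q, p ≤ q → Set.Icc p q ⊆ U →
      (∫ x in Set.Ioc p q, (g x * v' x - f x * v x) = g q * v q - g p * v p) ∧
      (∫ x in Set.Ioc p q, v' x = v q - v p) := by
    intro p q hpq hsubU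
    have hsubIoo : Set.Icc p q ⊆ Set.Ioo a b := hsubU.trans hUsub
    have hpIoo : p ∈ Set.Ioo a b := hsubIoo ⟨le_rfl, hpq⟩
    have hqIoo : q ∈ Set.Ioo a b := hsubIoo ⟨hpq, le_rfl⟩
    have hpab : p ∈ Set.Icc a b := ⟨hpIoo.1.le, hpIoo.2.le⟩
    have hqab : q ∈ Set.Icc a b := ⟨hqIoo.1.le, hqIoo.2.le⟩
    have hsubIcc : Set.Icc p q ⊆ Set.Icc a b := hsubIoo.trans Set.Ioo_subset_Icc_self
    have hsubIoc : Set.Icc p q ⊆ Set.Ioc a b := fun t ht =>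
      ⟨(hsubIoo ht).1, (hsubIoo ht).2.le⟩
    have part2 : ∫ x in Set.Ioc p q, v' x = v q - v p := by
      rw [← intervalIntegral.integral_of_le hpq]
      exact (hvdiff p q hpab hqab hpq).symm
    obtain ⟨z, hz, hzmin⟩ := isCompact_Icc.exists_isMinOn (Set.nonempty_Icc.2 hpq)
      ((hv.mono hsubIcc).abs)
    have hzpos : 0 < |v z| := abs_pos.2 (hsubU hz).2
    have hfIcc : IntegrableOn f (Set.Icc p q) := by
      have hsubIoc' : Set.Icc p q ⊆ Set.Ioc a b := hsubIoc
      refine Integrable.mono' (((hfvIoc.mono_set hsubIoc')).norm.const_mul (|v z|⁻¹))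
        (hfm.mono_measure (Measure.restrict_mono hsubIoc' le_rfl)) ?_
      filter_upwards [ae_restrict_mem measurableSet_Icc] with t ht
      have h1 : |v z| ≤ |v t| := hzmin ht
      rw [Real.norm_eq_abs, Real.norm_eq_abs, abs_mul, inv_mul_eq_div,
        le_div_iff₀ hzpos]
      exact mul_le_mul_of_nonneg_left h1 (abs_nonneg _)
    have hreploc : ∀ x ∈ Set.Icc p q, v x = v p + ∫ t in p..x, v' t := by
      intro x hx
      have := hvdiff p x hpab (hsubIcc hx) hx.1
      linarith
    have part1 := aux_ibp (αp := αp) hpq (hg.mono hsubIcc)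
      (fun x hx hxα => hd x (hsubIoo ⟨hx.1.le, hx.2.le⟩) hxα)
      hfIcc (hv'Ioc.mono_set hsubIoc)
      hreploc
      (hgv'Ioc.mono_set (fun t ht => hsubIoc ⟨ht.1.le, ht.2⟩))
      (hfvIoc.mono_set (fun t ht => hsubIoc ⟨ht.1.le, ht.2⟩))
    exact ⟨part1, part2⟩
  -- the U-part of the weak form vanishes against g·v
  have hGVint : IntegrableOn (fun x => g x * v' x - f x * v x) (Set.Ioc a b) :=
    hgv'Ioc.sub hfvIoc
  have hF1 : ∫ x in U, (g x * v' x - f x * v x) = 0 := by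
    apply aux_comp hUo hUsub (hGVint.mono_set hUIoc)
      (fun p q hpq hs => (hloc p q hpq hs).1)
      (hg.mul hv)
      (fun x hx hxU => by rw [hZv x hx hxU]; ring)
  -- the primitive property of v' restricted to U
  have hF2 : ∀ x ∈ Set.Icc a b, ∫ t in U ∩ Set.Ioo a x, v' t = v x := by
    intro x hx
    by_cases hxU : x ∈ U
    · obtain ⟨c, d, hac, hcx, hxd, hdb, hcU, hdU, hCeq⟩ := aux_component hUo hUsub hxU
      have hIoosub : Set.Ioo c d ⊆ U := hCeq ▸ connectedComponentIn_subset U x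
      have hcab : c ∈ Set.Icc a b := ⟨hac, le_trans hcx.le hx.2⟩
      have hdecomp : U ∩ Set.Ioo a x = (U ∩ Set.Ioo a c) ∪ Set.Ioo c x := by
        ext y
        constructor
        · rintro ⟨hyU, hy1, hy2⟩
          rcases le_or_gt y c with h | h
          · exact Or.inl ⟨hyU, hy1, h.lt_of_ne (fun he => hcU (he ▸ hyU))⟩
          · exact Or.inr ⟨h, hy2⟩
        · rintro (⟨hyU, hy1, hy2⟩ | ⟨hy1, hy2⟩)
          · exact ⟨hyU, hy1, hy2.trans hcx⟩
          · have hyU : y ∈ U := hIoosub ⟨hy1, hy2.trans hxd⟩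
            exact ⟨hyU, lt_of_le_of_lt hac hy1, hy2⟩
      have hdisj : Disjoint (U ∩ Set.Ioo a c) (Set.Ioo c x) := by
        rw [Set.disjoint_left]
        rintro y ⟨_, _, h2⟩ ⟨h3, _⟩
        exact absurd h3 (not_lt.2 h2.le)
      have hintsub1 : (U ∩ Set.Ioo a c) ⊆ Set.Ioc a b := fun t ht => hUIoc ht.1
      have hintsub2 : Set.Ioo c x ⊆ Set.Ioc a b := fun t ht =>
        ⟨lt_of_le_of_lt hac ht.1, le_trans ht.2.le hx.2⟩
      rw [hdecomp, MeasureTheory.setIntegral_union hdisj measurableSet_Ioo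
        (hv'Ioc.mono_set hintsub1) (hv'Ioc.mono_set hintsub2)]
      have hz1 : ∫ t in U ∩ Set.Ioo a c, v' t = 0 := by
        apply aux_comp (hUo.inter isOpen_Ioo) Set.inter_subset_right
          (hv'Ioc.mono_set hintsub1)
          (fun p q hpq hs => (hloc p q hpq (hs.trans Set.inter_subset_left)).2)
          (hv.mono (Set.Icc_subset_Icc le_rfl hcab.2))
        intro y hy hyW
        by_cases hyU : y ∈ U
        · have h1 : y ∉ Set.Ioo a c := fun h => hyW ⟨hyU, h⟩
          have h2 : a < y := hyU.1.1
          have h3 : y = c := le_antisymm hy.2 (by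
            rcases lt_or_ge y c with h | h
            · exact absurd ⟨h2, h⟩ h1
            · exact h)
          exact absurd (h3 ▸ hyU) hcU
        · exact hZv y ⟨hy.1, le_trans hy.2 hcab.2⟩ hyU
      have hz2 : ∫ t in Set.Ioo c x, v' t = v x - v c := by
        rw [← MeasureTheory.integral_Ioc_eq_integral_Ioo,
          ← intervalIntegral.integral_of_le hcx.le]
        exact (hvdiff c x hcab hx hcx.le).symm
      have hvc : v c = 0 := hZv c hcab hcU
      rw [hz1, hz2, hvc]
      ring
    · have h0 : v x = 0 := hZv x hx hxU
      rw [h0]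
      apply aux_comp (hUo.inter isOpen_Ioo) Set.inter_subset_right
        (hv'Ioc.mono_set (fun t ht => hUIoc ht.1))
        (fun p q hpq hs => (hloc p q hpq (hs.trans Set.inter_subset_left)).2)
        (hv.mono (Set.Icc_subset_Icc le_rfl hx.2))
      intro y hy hyW
      by_cases hyU : y ∈ U
      · have h1 : y ∉ Set.Ioo a x := fun h => hyW ⟨hyU, h⟩
        have h2 : a < y := hyU.1.1
        have h3 : y = x := le_antisymm hy.2 (by
          rcases lt_or_ge y x with h | h
          · exact absurd ⟨h2, h⟩ h1
          · exact h)
        exact absurd (h3 ▸ hyU) hxU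
      · exact hZv y ⟨hy.1, le_trans hy.2 hx.2⟩ hyU
  -- the indicator of the complement of U
  have hD : MeasurableSet (Set.Ioc a b \ U) := measurableSet_Ioc.diff hUo.measurableSet
  set hind : ℝ → ℝ := (Set.Ioc a b \ U).indicator v' with hinddef
  have hUIocint : ∀ x y, a ≤ x → x ≤ y → y ≤ b →
      ∫ t in U ∩ Set.Ioc x y, v' t = v y - v x := by
    intro x y hax hxy hyb
    have hxab : x ∈ Set.Icc a b := ⟨hax, le_trans hxy hyb⟩
    have hyab : y ∈ Set.Icc a b := ⟨le_trans hax hxy, hyb⟩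
    have hdecomp : U ∩ Set.Ioo a y = (U ∩ Set.Ioo a x) ∪ (U ∩ Set.Ico x y) := by
      ext t
      simp only [Set.mem_inter_iff, Set.mem_Ioo, Set.mem_Ico, Set.mem_union]
      constructor
      · rintro ⟨htU, ht1, ht2⟩
        rcases lt_or_ge t x with h | h
        · exact Or.inl ⟨htU, ht1, h⟩
        · exact Or.inr ⟨htU, h, ht2⟩
      · rintro (⟨htU, ht1, ht2⟩ | ⟨htU, ht1, ht2⟩)
        · exact ⟨htU, ht1, lt_of_lt_of_le ht2 hxy⟩
        · exact ⟨htU, htU.1.1, ht2⟩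
    have hdisj : Disjoint (U ∩ Set.Ioo a x) (U ∩ Set.Ico x y) := by
      rw [Set.disjoint_left]
      rintro t ⟨_, _, h2⟩ ⟨_, h3, _⟩
      exact absurd h3 (not_le.2 h2)
    have hmeas2 : MeasurableSet (U ∩ Set.Ico x y) :=
      hUo.measurableSet.inter measurableSet_Ico
    have hi1 : IntegrableOn v' (U ∩ Set.Ioo a x) :=
      hv'Ioc.mono_set (fun t ht => hUIoc ht.1)
    have hi2 : IntegrableOn v' (U ∩ Set.Ico x y) :=
      hv'Ioc.mono_set (fun t ht => hUIoc ht.1)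
    have hsum : ∫ t in U ∩ Set.Ioo a y, v' t
        = (∫ t in U ∩ Set.Ioo a x, v' t) + ∫ t in U ∩ Set.Ico x y, v' t := by
      rw [hdecomp, MeasureTheory.setIntegral_union hdisj hmeas2 hi1 hi2]
    have hico : ∫ t in U ∩ Set.Ico x y, v' t = ∫ t in U ∩ Set.Ioc x y, v' t := by
      apply MeasureTheory.setIntegral_congr_set
      exact Filter.EventuallyEq.inter (Filter.EventuallyEq.refl _ _)
        MeasureTheory.Ico_ae_eq_Ioc
    rw [hF2 x hxab, hF2 y hyab] at hsum
    rw [← hico]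
    linarith
  have hcells : ∀ x y, a ≤ x → x ≤ y → y ≤ b → ∫ t in x..y, hind t = 0 := by
    intro x y hax hxy hyb
    have hxab : x ∈ Set.Icc a b := ⟨hax, le_trans hxy hyb⟩
    have hyab : y ∈ Set.Icc a b := ⟨le_trans hax hxy, hyb⟩
    rw [intervalIntegral.integral_of_le hxy]
    have e1 : ∫ t in Set.Ioc x y, hind t
        = ∫ t in (Set.Ioc a b \ U) ∩ Set.Ioc x y, v' t := by
      rw [hinddef]
      rw [MeasureTheory.integral_indicator hD,
        MeasureTheory.Measure.restrict_restrict hD]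
    have e2 : (Set.Ioc a b \ U) ∩ Set.Ioc x y = Set.Ioc x y \ U := by
      ext t
      simp only [Set.mem_inter_iff, Set.mem_diff, Set.mem_Ioc]
      constructor
      · rintro ⟨⟨_, h2⟩, h3⟩; exact ⟨h3, h2⟩
      · rintro ⟨⟨h1, h2⟩, h3⟩
        exact ⟨⟨⟨lt_of_le_of_lt hax h1, le_trans h2 hyb⟩, h3⟩, h1, h2⟩
    have hsplit : (U ∩ Set.Ioc x y) ∪ (Set.Ioc x y \ U) = Set.Ioc x y := by
      rw [Set.inter_comm]
      exact Set.inter_union_diff _ _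
    have hdisj2 : Disjoint (U ∩ Set.Ioc x y) (Set.Ioc x y \ U) := by
      rw [Set.disjoint_left]
      rintro t ⟨h1, _⟩ ⟨_, h2⟩
      exact h2 h1
    have hsubxy : Set.Ioc x y ⊆ Set.Ioc a b := fun t ht =>
      ⟨lt_of_le_of_lt hax ht.1, le_trans ht.2 hyb⟩
    have hiu : IntegrableOn v' (U ∩ Set.Ioc x y) :=
      hv'Ioc.mono_set (fun t ht => hUIoc ht.1)
    have hidu : IntegrableOn v' (Set.Ioc x y \ U) :=
      hv'Ioc.mono_set (fun t ht => hsubxy ht.1)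
    have htot : ∫ t in Set.Ioc x y, v' t
        = (∫ t in U ∩ Set.Ioc x y, v' t) + ∫ t in Set.Ioc x y \ U, v' t := by
      have h := MeasureTheory.setIntegral_union hdisj2
        (measurableSet_Ioc.diff hUo.measurableSet) hiu hidu
      rw [hsplit] at h
      exact h
    have hv1 : ∫ t in Set.Ioc x y, v' t = v y - v x := by
      rw [← intervalIntegral.integral_of_le hxy]
      exact (hvdiff x y hxab hyab hxy).symm
    have hv2 := hUIocint x y hax hxy hyb
    rw [e1, e2]
    rw [hv1, hv2] at htot
    linarith
  have hindII : IntervalIntegrable hind volume a b := by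
    rw [intervalIntegrable_iff, Set.uIoc_of_le hab]
    exact hv'Ioc.indicator hD
  have hZpart : ∫ x in a..b, g x * hind x = 0 := aux_cells hab hg hindII hcells
  have hZ2 : ∫ x in Set.Ioc a b \ U, (g x * v' x) = 0 := by
    have hgind : (fun x => g x * hind x)
        = (Set.Ioc a b \ U).indicator (fun t => g t * v' t) := by
      funext x
      rw [hinddef]
      by_cases hx : x ∈ Set.Ioc a b \ U
      · simp [Set.indicator_of_mem hx]
      · simp [Set.indicator_of_notMem hx]
    have e : ∫ x in a..b, g x * hind x = ∫ x in Set.Ioc a b \ U, g x * v' x := by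
      rw [intervalIntegral.integral_of_le hab, hgind,
        MeasureTheory.integral_indicator hD,
        MeasureTheory.Measure.restrict_restrict hD,
        Set.inter_eq_self_of_subset_left Set.diff_subset]
    rw [← e, hZpart]
  have hsplitall : ∫ x in Set.Ioc a b, (g x * v' x - f x * v x)
      = (∫ x in U, (g x * v' x - f x * v x))
        + ∫ x in Set.Ioc a b \ U, (g x * v' x - f x * v x) := by
    rw [← MeasureTheory.setIntegral_union Set.disjoint_sdiff_right hD
      (hGVint.mono_set hUIoc) (hGVint.mono_set Set.diff_subset),
      Set.union_diff_cancel hUIoc]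
  have hDpart : ∫ x in Set.Ioc a b \ U, (g x * v' x - f x * v x) = 0 := by
    have : ∀ x ∈ Set.Ioc a b \ U, g x * v' x - f x * v x = g x * v' x := by
      intro x hx
      have hvx : v x = 0 := hZv x ⟨hx.1.1.le, hx.1.2⟩ hx.2
      rw [hvx]; ring
    rw [setIntegral_congr_fun hD this]
    exact hZ2
  have hfinal : ∫ x in Set.Ioc a b, (g x * v' x - f x * v x) = 0 := by
    rw [hsplitall, hF1, hDpart]; ring
  have hsub : ∫ x in a..b, (g x * v' x - f x * v x)
      = (∫ x in a..b, g x * v' x) - ∫ x in a..b, f x * v x :=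
    intervalIntegral.integral_sub hgv' hfvi
  rw [intervalIntegral.integral_of_le hab] at hsub
  rw [hfinal] at hsub
  linarith

/-- For the pure diffusion interface problem, the IFE Galerkin solution is exact at all
mesh points, since `u_h = I_h u` and the interpolant matches `u` at the mesh points. -/
theorem ife_exact_at_mesh_points
    (a b α : ℝ) (hab : a < b) (hα : α ∈ Set.Ioo a b)
    (βm βp : ℝ) (hβm : 0 < βm) (hβp : 0 < βp)
    (β : ℝ → ℝ) (hβ : ∀ x, β x = if x < α then βm else βp)
    (u f : ℝ → ℝ)
    (hu_cont : ContinuousOn u (Set.Icc a b))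
    (hua : u a = 0) (hub : u b = 0)
    (hu_diff : ∀ x ∈ Set.Ioo a b, x ≠ α → DifferentiableAt ℝ u x)
    (hflux_cont : ContinuousOn (fun x => β x * deriv u x) (Set.Icc a b))
    (hstrong : ∀ x ∈ Set.Ioo a b, x ≠ α →
      HasDerivAt (fun y => β y * deriv u y) (-(f x)) x)
    (S : Submodule ℝ (ℝ → ℝ)) (hfin : FiniteDimensional ℝ S)
    (hS0 : ∀ v ∈ S, v a = 0 ∧ v b = 0 ∧ ContinuousOn v (Set.Icc a b) ∧
      ∀ x ∈ Set.Icc a b, v x = ∫ t in a..x, deriv v t)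
    (hSint : ∀ v ∈ S, ∀ w ∈ S,
      IntervalIntegrable (fun x => β x * deriv v x * deriv w x) volume a b)
    (hSu : ∀ v ∈ S, IntervalIntegrable (fun x => β x * deriv u x * deriv v x) volume a b)
    (hfv : ∀ v ∈ S, IntervalIntegrable (fun x => f x * v x) volume a b)
    (Ihu : ℝ → ℝ) (hIhu : Ihu ∈ S)
    (horth : ∀ v ∈ S, ∫ x in a..b, β x * (deriv u x - deriv Ihu x) * deriv v x = 0)
    (uh : ℝ → ℝ) (huh : uh ∈ S)
    (hGal : ∀ v ∈ S, ∫ x in a..b, β x * deriv uh x * deriv v x = ∫ x in a..b, f x * v x)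
    (N : ℕ) (xm : Fin (N + 1) → ℝ) (hmono : StrictMono xm)
    (hx0 : xm 0 = a) (hxN : xm (Fin.last N) = b)
    (hinterp : ∀ i, Ihu (xm i) = u (xm i)) :
    ∀ i, u (xm i) - uh (xm i) = 0 := by
  intro i
  have hab' : a ≤ b := hab.le
  -- β facts
  have hβpos : ∀ x, 0 < β x := fun x => by rw [hβ x]; split_ifs <;> assumption
  have hminpos : 0 < min βm βp := lt_min hβm hβp
  have hβmin : ∀ x, min βm βp ≤ β x := fun x => by
    rw [hβ x]; split_ifs
    exacts [min_le_left _ _, min_le_right _ _]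
  -- derivatives of members of S are integrable
  have hSfacts : ∀ w ∈ S, IntervalIntegrable (deriv w) volume a b := by
    intro w hw
    have h1 := hSint w hw w hw
    set c := (min βm βp)⁻¹ with hcdef
    have hc : 0 < c := inv_pos.2 hminpos
    have hbig : IntervalIntegrable (fun x => 1 + c * (β x * deriv w x * deriv w x))
        volume a b := (_root_.intervalIntegrable_const (c := (1:ℝ))).add (h1.const_mul c)
    refine hbig.mono_fun ((measurable_deriv w).aestronglyMeasurable) ?_
    filter_upwards with x
    have h2 : 0 < β x := hβpos x
    have h4 : 1 ≤ c * β x := by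
      rw [hcdef, ← div_eq_inv_mul]
      exact (one_le_div hminpos).2 (hβmin x)
    have h3 : deriv w x ^ 2 ≤ c * (β x * deriv w x * deriv w x) := by
      nlinarith [sq_nonneg (deriv w x)]
    have h5 : ‖deriv w x‖ ≤ 1 + deriv w x ^ 2 := by
      rw [Real.norm_eq_abs]
      nlinarith [sq_abs (deriv w x), abs_nonneg (deriv w x),
        sq_nonneg (|deriv w x| - 1)]
    have h6 : (0:ℝ) ≤ 1 + c * (β x * deriv w x * deriv w x) := by
      nlinarith [sq_nonneg (deriv w x)]
    rw [Real.norm_eq_abs (1 + c * (β x * deriv w x * deriv w x)), abs_of_nonneg h6]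
    linarith
  obtain ⟨hIa, hIb, hIcont, hIrep⟩ := hS0 Ihu hIhu
  obtain ⟨hUa, hUb, hUcont, hUrep⟩ := hS0 uh huh
  have hI' := hSfacts Ihu hIhu
  have hU' := hSfacts uh huh
  -- measurability of f
  have hfm : AEStronglyMeasurable f (volume.restrict (Set.Ioc a b)) := by
    have hnull : volume ({α, b} : Set ℝ) = 0 :=
      ((Set.finite_singleton b).insert α).measure_zero _
    have h1 : ∀ᵐ x ∂volume, x ∉ ({α, b} : Set ℝ) :=
      measure_eq_zero_iff_ae_notMem.1 hnull
    have hae : f =ᵐ[volume.restrict (Set.Ioc a b)]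
        (fun x => -deriv (fun y => β y * deriv u y) x) := by
      filter_upwards [MeasureTheory.ae_restrict_of_ae h1,
        MeasureTheory.ae_restrict_mem measurableSet_Ioc] with x hx1 hx2
      simp only [Set.mem_insert_iff, Set.mem_singleton_iff, not_or] at hx1
      have hxIoo : x ∈ Set.Ioo a b := ⟨hx2.1, lt_of_le_of_ne hx2.2 hx1.2⟩
      have hder := (hstrong x hxIoo hx1.1).deriv
      rw [hder]
      ring
    exact (((measurable_deriv _).neg).aestronglyMeasurable).congr hae.symm
  -- weak form for test functions in S
  have hweak : ∀ w ∈ S, ∫ x in a..b, β x * deriv u x * deriv w x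
      = ∫ x in a..b, f x * w x := by
    intro w hw
    obtain ⟨hwa, hwb, hwcont, hwrep⟩ := hS0 w hw
    exact aux_weak (αp := α) hab' hflux_cont
      (fun x hx hxα => hstrong x hx hxα)
      hwa hwb hwcont hwrep (hSfacts w hw) (hSu w hw) (hfv w hw) hfm
  -- orthogonality rewriting
  have hsplit_orth : ∀ w ∈ S, ∫ x in a..b, β x * deriv u x * deriv w x
      = ∫ x in a..b, β x * deriv Ihu x * deriv w x := by
    intro w hw
    have h1 := horth w hw
    have e : (fun x => β x * (deriv u x - deriv Ihu x) * deriv w x)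
        = fun x => β x * deriv u x * deriv w x - β x * deriv Ihu x * deriv w x := by
      funext x; ring
    rw [e, intervalIntegral.integral_sub (hSu w hw) (hSint Ihu hIhu w hw)] at h1
    linarith
  have hA : ∫ x in a..b, β x * deriv Ihu x * deriv Ihu x = ∫ x in a..b, f x * Ihu x := by
    rw [← hsplit_orth Ihu hIhu]; exact hweak Ihu hIhu
  have hB : ∫ x in a..b, β x * deriv Ihu x * deriv uh x = ∫ x in a..b, f x * uh x := by
    rw [← hsplit_orth uh huh]; exact hweak uh huh
  have hB2 : ∫ x in a..b, β x * deriv uh x * deriv Ihu x = ∫ x in a..b, f x * Ihu x :=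
    hGal Ihu hIhu
  have hC : ∫ x in a..b, β x * deriv uh x * deriv uh x = ∫ x in a..b, f x * uh x :=
    hGal uh huh
  -- the energy of the difference vanishes
  have hEexp : (fun x => β x * (deriv Ihu x - deriv uh x) * (deriv Ihu x - deriv uh x))
      = fun x => (β x * deriv Ihu x * deriv Ihu x - β x * deriv Ihu x * deriv uh x)
        - (β x * deriv uh x * deriv Ihu x - β x * deriv uh x * deriv uh x) := by
    funext x; ring
  have hEii : IntervalIntegrable
      (fun x => β x * (deriv Ihu x - deriv uh x) * (deriv Ihu x - deriv uh x))
      volume a b := by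
    rw [hEexp]
    exact ((hSint Ihu hIhu Ihu hIhu).sub (hSint Ihu hIhu uh huh)).sub
      ((hSint uh huh Ihu hIhu).sub (hSint uh huh uh huh))
  have hE : ∫ x in a..b,
      β x * (deriv Ihu x - deriv uh x) * (deriv Ihu x - deriv uh x) = 0 := by
    rw [hEexp, intervalIntegral.integral_sub
        ((hSint Ihu hIhu Ihu hIhu).sub (hSint Ihu hIhu uh huh))
        ((hSint uh huh Ihu hIhu).sub (hSint uh huh uh huh)),
      intervalIntegral.integral_sub (hSint Ihu hIhu Ihu hIhu) (hSint Ihu hIhu uh huh),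
      intervalIntegral.integral_sub (hSint uh huh Ihu hIhu) (hSint uh huh uh huh),
      hA, hB, hB2, hC]
    ring
  have hEintOn : IntegrableOn
      (fun x => β x * (deriv Ihu x - deriv uh x) * (deriv Ihu x - deriv uh x))
      (Set.Ioc a b) := by
    have := hEii
    rwa [intervalIntegrable_iff, Set.uIoc_of_le hab'] at this
  rw [intervalIntegral.integral_of_le hab'] at hE
  have hae0 := (MeasureTheory.integral_eq_zero_iff_of_nonneg
    (fun x => by
      have := hβpos x
      have := mul_self_nonneg (deriv Ihu x - deriv uh x)
      simp only [Pi.zero_apply]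
      nlinarith) hEintOn).1 hE
  have heae : ∀ᵐ x ∂(volume.restrict (Set.Ioc a b)), deriv Ihu x - deriv uh x = 0 := by
    filter_upwards [hae0] with x hx
    simp only [Pi.zero_apply] at hx
    have hb := hβpos x
    rcases mul_eq_zero.1 hx with h | h
    · rcases mul_eq_zero.1 h with h' | h'
      · exact absurd h' (ne_of_gt hb)
      · exact h'
    · exact h
  -- evaluate at the mesh point
  have hximem : xm i ∈ Set.Icc a b := by
    constructor
    · rw [← hx0]; exact hmono.monotone (Fin.zero_le i)
    · rw [← hxN]; exact hmono.monotone (Fin.le_last i)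
  have hIi : IntervalIntegrable (deriv Ihu) volume a (xm i) := hI'.mono_set (by
    rw [Set.uIcc_of_le hab', Set.uIcc_of_le hximem.1]
    exact Set.Icc_subset_Icc le_rfl hximem.2)
  have hUi : IntervalIntegrable (deriv uh) volume a (xm i) := hU'.mono_set (by
    rw [Set.uIcc_of_le hab', Set.uIcc_of_le hximem.1]
    exact Set.Icc_subset_Icc le_rfl hximem.2)
  have hsubIoc : Set.uIoc a (xm i) ⊆ Set.Ioc a b := by
    rw [Set.uIoc_of_le hximem.1]
    exact Set.Ioc_subset_Ioc le_rfl hximem.2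
  have hmoved : ∀ᵐ x ∂volume, x ∈ Set.uIoc a (xm i) → deriv Ihu x - deriv uh x = 0 := by
    have h1 := (MeasureTheory.ae_restrict_iff' measurableSet_Ioc).1 heae
    filter_upwards [h1] with x hx hmem
    exact hx (hsubIoc hmem)
  have hzero : ∫ x in a..(xm i), (deriv Ihu x - deriv uh x) = 0 := by
    rw [intervalIntegral.integral_congr_ae hmoved]
    exact intervalIntegral.integral_zero
  have hfin : Ihu (xm i) - uh (xm i) = 0 := by
    rw [hIrep (xm i) hximem, hUrep (xm i) hximem,
      ← intervalIntegral.integral_sub hIi hUi]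
    exact hzero
  rw [← hinterp i]
  exact hfin
end
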